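/- Let A ∈ ℝ^{m×n}, b ∈ ℝ^m, c ∈ ℝⁿ, and suppose both the primal min{c·x : Ax ≥ b, x ≥ 0} and dual max{b·u : A^T u ≤ c, u ≥ 0} are feasible. Then both have optimal solutions and their optimal values are equal. -/

import Mathlib

open Matrix Finset

section Cara
variable {κ : Type*} [Fintype κ] {E : Type*} [AddCommGroup E] [Module ℝ E]

lemma cone_caratheodory (v : κ → E) (w : κ → ℝ) (hw : 0 ≤ w) :
    ∃ w' : κ → ℝ, 0 ≤ w' ∧ ∑ j, w' j • v j = ∑ j, w j • v j ∧
      LinearIndependent ℝ (fun j : {j // w' j ≠ 0} => v j) := by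
  classical
  suffices h : ∀ (N : ℕ) (w : κ → ℝ), (univ.filter (fun j => w j ≠ 0)).card ≤ N → 0 ≤ w →
      ∃ w' : κ → ℝ, 0 ≤ w' ∧ ∑ j, w' j • v j = ∑ j, w j • v j ∧
      LinearIndependent ℝ (fun j : {j // w' j ≠ 0} => v j) from h _ w le_rfl hw
  intro N
  induction N with
  | zero =>
    intro w hcard hw
    refine ⟨w, hw, rfl, ?_⟩
    have : ∀ j, w j = 0 := by
      intro j
      by_contra hj
      have : j ∈ univ.filter (fun j => w j ≠ 0) := by simp [hj]
      have := Finset.card_pos.2 ⟨j, this⟩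
      omega
    have : IsEmpty {j // w j ≠ 0} := ⟨fun j => j.2 (this j.1)⟩
    exact linearIndependent_empty_type
  | succ N ih =>
    intro w hcard hw
    by_cases hli : LinearIndependent ℝ (fun j : {j // w j ≠ 0} => v j)
    · exact ⟨w, hw, rfl, hli⟩
    · obtain ⟨g, hgsum, j₀, hgj₀⟩ := Fintype.not_linearIndependent_iff.1 hli
      suffices key : ∀ g : {j // w j ≠ 0} → ℝ, ∑ j, g j • v j = 0 → ∀ j₀, 0 < g j₀ →
          ∃ w' : κ → ℝ, 0 ≤ w' ∧ ∑ j, w' j • v j = ∑ j, w j • v j ∧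
          LinearIndependent ℝ (fun j : {j // w' j ≠ 0} => v j) by
        rcases hgj₀.lt_or_gt with hneg | hpos
        · exact key (-g) (by simpa [neg_smul, ← Finset.sum_neg_distrib] using congrArg Neg.neg hgsum) j₀ (by simpa using hneg)
        · exact key g hgsum j₀ hpos
      intro g hgsum j₀ hgj₀
      set G : κ → ℝ := fun j => if h : w j ≠ 0 then g ⟨j, h⟩ else 0 with hG
      have hGsum : ∑ j, G j • v j = 0 := by
        have h1 : ∑ j, G j • v j = ∑ j ∈ univ.filter (fun j => w j ≠ 0), G j • v j :=
          (Finset.sum_subset (Finset.subset_univ _) (fun j _ hj => by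
            simp only [Finset.mem_filter, Finset.mem_univ, true_and, not_not] at hj
            simp [hG, hj])).symm
        have h2 : ∑ j ∈ univ.filter (fun j => w j ≠ 0), G j • v j
            = ∑ j : {j // w j ≠ 0}, G (j : κ) • v (j : κ) :=
          Finset.sum_subtype _ (by simp) _
        have h3 : ∑ j : {j // w j ≠ 0}, G (j : κ) • v (j : κ) = ∑ j : {j // w j ≠ 0}, g j • v (j : κ) := by
          refine Finset.sum_congr rfl (fun j _ => ?_)
          simp [hG, j.2]
        rw [h1, h2, h3, hgsum]
      have hGj₀ : 0 < G (j₀ : κ) := by simpa [hG, j₀.2] using hgj₀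
      set Sp : Finset κ := univ.filter (fun j => 0 < G j) with hSp
      obtain ⟨j₁, hj₁mem, hj₁min⟩ := Sp.exists_min_image (fun j => w j / G j)
        ⟨(j₀ : κ), by simp [hSp, hGj₀]⟩
      have hGj₁ : 0 < G j₁ := by simpa [hSp] using hj₁mem
      set t : ℝ := w j₁ / G j₁ with ht
      have htnn : 0 ≤ t := div_nonneg (hw j₁) hGj₁.le
      set w' : κ → ℝ := fun j => w j - t * G j with hw'
      have hw'nn : 0 ≤ w' := by
        intro j
        rcases le_or_gt (G j) 0 with hGj | hGj
        · have h1 : t * G j ≤ 0 := mul_nonpos_of_nonneg_of_nonpos htnn hGj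
          have h2 : (0:ℝ) ≤ w j := hw j
          simp only [hw', Pi.zero_apply]
          linarith
        · have hmem : j ∈ Sp := by simp [hSp, hGj]
          have := hj₁min j hmem
          rw [div_le_div_iff₀ hGj₁ hGj] at this
          simp only [hw', Pi.zero_apply, ht]
          rw [sub_nonneg, div_mul_eq_mul_div, div_le_iff₀ hGj₁]
          linarith
      have hw'sum : ∑ j, w' j • v j = ∑ j, w j • v j := by
        simp only [hw', sub_smul, mul_smul, Finset.sum_sub_distrib]
        rw [← Finset.smul_sum, hGsum, smul_zero, sub_zero]
      have hw'supp : ∀ j, w' j ≠ 0 → w j ≠ 0 := by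
        intro j hj
        by_contra hwj
        have : G j = 0 := by simp [hG, hwj]
        simp [hw', hwj, this] at hj
      have hw'j₁ : w' j₁ = 0 := by
        simp only [hw', ht]
        rw [div_mul_cancel₀ _ hGj₁.ne', sub_self]
      have hcard' : (univ.filter (fun j => w' j ≠ 0)).card ≤ N := by
        have hsub : univ.filter (fun j => w' j ≠ 0) ⊆
            (univ.filter (fun j => w j ≠ 0)).erase j₁ := by
          intro j hj
          simp only [Finset.mem_filter, Finset.mem_univ, true_and] at hj
          refine Finset.mem_erase.2 ⟨?_, by simp [hw'supp j hj]⟩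
          rintro rfl
          exact hj hw'j₁
        have hj₁w : w j₁ ≠ 0 := by
          intro h0
          have : G j₁ = 0 := by simp [hG, h0]
          exact hGj₁.ne' this
        have : ((univ.filter (fun j => w j ≠ 0)).erase j₁).card
            < (univ.filter (fun j => w j ≠ 0)).card :=
          Finset.card_erase_lt_of_mem (by simp [hj₁w])
        have := Finset.card_le_card hsub
        omega
      obtain ⟨w'', h1, h2, h3⟩ := ih w' hcard' hw'nn
      exact ⟨w'', h1, h2.trans hw'sum, h3⟩
end Cara
section Closed
variable {κ : Type*} [Fintype κ] {E : Type*} [NormedAddCommGroup E] [NormedSpace ℝ E]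
  [FiniteDimensional ℝ E]

lemma cone_isClosed (v : κ → E) :
    IsClosed {x : E | ∃ w : κ → ℝ, 0 ≤ w ∧ ∑ j, w j • v j = x} := by
  classical
  -- the linear combination map on a finset
  let L : (S : Finset κ) → (({j : κ // j ∈ S} → ℝ) →ₗ[ℝ] E) := fun S =>
    { toFun := fun w : {j : κ // j ∈ S} → ℝ => ∑ j : S, w j • v j
      map_add' := by
        intro w w'
        simp only [Pi.add_apply, add_smul, Finset.sum_add_distrib]
      map_smul' := by
        intro c w
        simp only [Pi.smul_apply, smul_eq_mul, mul_smul, RingHom.id_apply,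
          ← Finset.smul_sum] }
  have hset : {x : E | ∃ w : κ → ℝ, 0 ≤ w ∧ ∑ j, w j • v j = x}
      = ⋃ (S : Finset κ) (_ : LinearIndependent ℝ (fun j : S => v j)),
          (L S) '' {w | 0 ≤ w} := by
    ext x
    simp only [Set.mem_setOf_eq, Set.mem_iUnion, Set.mem_image]
    constructor
    · rintro ⟨w, hw, rfl⟩
      obtain ⟨w', hw'nn, hw'sum, hw'li⟩ := cone_caratheodory v w hw
      set S : Finset κ := Finset.univ.filter (fun j => w' j ≠ 0) with hS
      have he : ∀ j : S, w' (j : κ) ≠ 0 := fun j => by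
        have := j.2; simp only [hS, Finset.mem_filter] at this; exact this.2
      refine ⟨S, ?_, fun j => w' (j : κ), fun j => hw'nn _, ?_⟩
      · let e : {j : κ // j ∈ S} ≃ {j : κ // w' j ≠ 0} :=
          Equiv.subtypeEquivRight (by simp [hS])
        have := hw'li.comp e e.injective
        exact this
      · show ∑ j : S, w' (j : κ) • v (j : κ) = _
        rw [← hw'sum]
        rw [Finset.sum_coe_sort S (fun j => w' j • v j)]
        refine Finset.sum_subset (Finset.subset_univ _) (fun j _ hj => ?_)
        simp only [hS, Finset.mem_filter, Finset.mem_univ, true_and, not_not] at hj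
        simp [hj]
    · rintro ⟨S, hSli, w, hwnn, rfl⟩
      refine ⟨fun j => if h : j ∈ S then w ⟨j, h⟩ else 0, ?_, ?_⟩
      · intro j
        by_cases h : j ∈ S
        · simpa [h] using hwnn ⟨j, h⟩
        · simp [h]
      · show (∑ j : κ, _) = ∑ j : S, w j • v j
        rw [← Finset.sum_subset (Finset.subset_univ S) (fun j _ hj => by simp [hj]),
          ← Finset.sum_coe_sort S (fun j => (if h : j ∈ S then w ⟨j, h⟩ else (0:ℝ)) • v j)]
        exact Finset.sum_congr rfl fun j _ => by simp [j.2]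
  rw [hset]
  refine isClosed_iUnion_of_finite (fun S => isClosed_iUnion_of_finite (fun hS => ?_))
  have hinj : Function.Injective (L S) := by
    rw [← LinearMap.ker_eq_bot, LinearMap.ker_eq_bot']
    intro w hw0
    have := Fintype.linearIndependent_iff.1 hS w hw0
    funext j; exact this j
  exact ((L S).isClosedEmbedding_of_injective
    (LinearMap.ker_eq_bot.2 hinj)).isClosedMap _ isClosed_Ici
end Closed
section Farkas
variable {ι κ : Type*} [Fintype ι] [Fintype κ]

lemma farkas_cone (v : κ → (ι → ℝ)) (d : ι → ℝ)
    (h : ¬ ∃ w : κ → ℝ, 0 ≤ w ∧ ∑ j, w j • v j = d) :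
    ∃ y : ι → ℝ, (∀ j, 0 ≤ v j ⬝ᵥ y) ∧ d ⬝ᵥ y < 0 := by
  classical
  set u : κ → EuclideanSpace ℝ ι := fun j => (WithLp.equiv 2 (ι → ℝ)).symm (v j) with hu
  set d' : EuclideanSpace ℝ ι := (WithLp.equiv 2 (ι → ℝ)).symm d with hd'
  set K : ConvexCone ℝ (EuclideanSpace ℝ ι) :=
    { carrier := {x | ∃ w : κ → ℝ, 0 ≤ w ∧ ∑ j, w j • u j = x}
      smul_mem' := by
        rintro t ht x ⟨w, hw, rfl⟩
        refine ⟨t • w, smul_nonneg ht.le hw, ?_⟩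
        rw [Finset.smul_sum]
        exact Finset.sum_congr rfl fun j _ => by
          simp [Pi.smul_apply, smul_eq_mul, mul_smul]
      add_mem' := by
        rintro x ⟨w, hw, rfl⟩ y ⟨w', hw', rfl⟩
        refine ⟨w + w', add_nonneg hw hw', ?_⟩
        rw [← Finset.sum_add_distrib]
        exact Finset.sum_congr rfl fun j _ => by simp [add_smul] } with hK
  have hKne : (K : Set (EuclideanSpace ℝ ι)).Nonempty :=
    ⟨0, 0, le_rfl, by simp⟩
  have hKcl : IsClosed (K : Set (EuclideanSpace ℝ ι)) := cone_isClosed u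
  have hdK : d' ∉ K := by
    rintro ⟨w, hw, hsum⟩
    exact h ⟨w, hw, by simpa [hu, hd', ← WithLp.toLp_sum, ← WithLp.toLp_smul] using congrArg WithLp.ofLp hsum⟩
  obtain ⟨y, hy1, hy2⟩ :=
    (show ∃ y, (∀ x ∈ K, 0 ≤ inner ℝ x y) ∧ inner ℝ y d' < 0 from by
      obtain ⟨y, hy1, hy2⟩ := ProperCone.hyperplane_separation'
        (⟨K.toPointedCone ⟨0, le_rfl, by simp⟩, hKcl⟩ : ProperCone ℝ (EuclideanSpace ℝ ι)) hdK
      exact ⟨y, hy1, by rwa [real_inner_comm]⟩)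
  refine ⟨WithLp.equiv 2 (ι → ℝ) y, fun j => ?_, ?_⟩
  · have huj : u j ∈ K := by
      refine ⟨Pi.single j 1, ?_, ?_⟩
      · intro j'; by_cases hj : j' = j <;> simp [Pi.single_apply, hj]
      · rw [Finset.sum_eq_single j (fun j' _ hj' => by simp [Pi.single_apply, hj'])
          (fun hj => absurd (Finset.mem_univ j) hj)]
        simp
    have := hy1 (u j) huj
    rw [PiLp.inner_apply] at this
    simpa [dotProduct, hu, RCLike.inner_apply, WithLp.equiv, mul_comm] using this
  · rw [PiLp.inner_apply] at hy2
    have : ∑ i, y i * d' i < 0 := by simpa [mul_comm] using hy2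
    rw [show d ⬝ᵥ (WithLp.equiv 2 (ι → ℝ)) y = ∑ i, y i * d' i from
      Finset.sum_congr rfl fun i _ => mul_comm _ _]
    exact this
end Farkas
section Ineq
variable {ι κ : Type*} [Fintype ι] [Fintype κ] [DecidableEq ι]

lemma farkas_ineq (M : Matrix ι κ ℝ) (q : ι → ℝ)
    (h : ¬ ∃ z : κ → ℝ, 0 ≤ z ∧ q ≤ M *ᵥ z) :
    ∃ y : ι → ℝ, 0 ≤ y ∧ y ᵥ* M ≤ 0 ∧ 0 < q ⬝ᵥ y := by
  classical
  set v : κ ⊕ ι → (ι → ℝ) := Sum.elim (fun j i => M i j) (fun i => -Pi.single i 1) with hv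
  have hnosol : ¬ ∃ w : κ ⊕ ι → ℝ, 0 ≤ w ∧ ∑ jj, w jj • v jj = q := by
    rintro ⟨w, hw, hsum⟩
    refine h ⟨w ∘ Sum.inl, fun j => hw _, fun i => ?_⟩
    have hi := congrFun hsum i
    rw [Fintype.sum_sum_type] at hi
    simp only [Pi.add_apply, Finset.sum_apply, Pi.smul_apply, smul_eq_mul, hv, Sum.elim_inl,
      Sum.elim_inr, Pi.neg_apply, Pi.single_apply, mul_neg, mul_ite, mul_one, mul_zero] at hi
    rw [Finset.sum_neg_distrib, Finset.sum_ite_eq Finset.univ i (fun i' => w (Sum.inr i'))] at hi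
    simp only [Finset.mem_univ, if_true] at hi
    have hmv : (M *ᵥ (w ∘ Sum.inl)) i = ∑ j, w (Sum.inl j) * M i j :=
      Finset.sum_congr rfl fun j _ => mul_comm _ _
    have hwnn : 0 ≤ w (Sum.inr i) := hw _
    rw [hmv]
    linarith [hi]
  obtain ⟨y0, hy0, hy0q⟩ := farkas_cone v q hnosol
  refine ⟨-y0, fun i => ?_, fun j => ?_, ?_⟩
  · have := hy0 (Sum.inr i)
    simp only [hv, Sum.elim_inr] at this
    rw [show (-Pi.single i 1) ⬝ᵥ y0 = -y0 i by
      simp [dotProduct, Pi.single_apply, ite_mul, Finset.sum_ite_eq]] at this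
    simpa using this
  · have := hy0 (Sum.inl j)
    simp only [hv, Sum.elim_inl] at this
    have hvm : ((-y0) ᵥ* M) j = -((fun i => M i j) ⬝ᵥ y0) := by
      simp [vecMul, dotProduct, mul_comm]
    rw [hvm]
    simpa using this
  · rw [show q ⬝ᵥ (-y0) = -(q ⬝ᵥ y0) by simp [dotProduct]]
    linarith

lemma weak_duality {m n : ℕ} (A : Matrix (Fin m) (Fin n) ℝ) (b : Fin m → ℝ) (c : Fin n → ℝ)
    {x : Fin n → ℝ} {u : Fin m → ℝ} (hx1 : b ≤ A *ᵥ x) (hx2 : 0 ≤ x)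
    (hu1 : u ᵥ* A ≤ c) (hu2 : 0 ≤ u) : b ⬝ᵥ u ≤ c ⬝ᵥ x := by
  calc b ⬝ᵥ u ≤ (A *ᵥ x) ⬝ᵥ u := dotProduct_le_dotProduct_of_nonneg_right hx1 hu2
    _ = (u ᵥ* A) ⬝ᵥ x := by rw [dotProduct_comm, dotProduct_mulVec]
    _ ≤ c ⬝ᵥ x := dotProduct_le_dotProduct_of_nonneg_right hu1 hx2
end Ineq
/-- Strong duality for linear programming: if both primal and dual are feasible,
then both attain their optima and the optimal values coincide. -/
theorem lp_strong_duality
    {m n : ℕ} (A : Matrix (Fin m) (Fin n) ℝ) (b : Fin m → ℝ) (c : Fin n → ℝ)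
    (hprimal : ∃ x : Fin n → ℝ, b ≤ A *ᵥ x ∧ 0 ≤ x)
    (hdual : ∃ u : Fin m → ℝ, u ᵥ* A ≤ c ∧ 0 ≤ u) :
    ∃ (xstar : Fin n → ℝ) (ustar : Fin m → ℝ),
      (b ≤ A *ᵥ xstar ∧ 0 ≤ xstar) ∧ (ustar ᵥ* A ≤ c ∧ 0 ≤ ustar) ∧
      (∀ x : Fin n → ℝ, b ≤ A *ᵥ x → 0 ≤ x → c ⬝ᵥ xstar ≤ c ⬝ᵥ x) ∧
      (∀ u : Fin m → ℝ, u ᵥ* A ≤ c → 0 ≤ u → b ⬝ᵥ u ≤ b ⬝ᵥ ustar) ∧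
      c ⬝ᵥ xstar = b ⬝ᵥ ustar := by
  classical
  obtain ⟨x0, hx01, hx02⟩ := hprimal
  obtain ⟨u0, hu01, hu02⟩ := hdual
  -- the combined primal-dual system
  set M : Matrix ((Fin m ⊕ Fin n) ⊕ Unit) (Fin n ⊕ Fin m) ℝ :=
    fun r z => match r, z with
      | .inl (.inl i), .inl j => A i j
      | .inl (.inl _), .inr _ => 0
      | .inl (.inr _), .inl _ => 0
      | .inl (.inr j), .inr i => -A i j
      | .inr _, .inl j => -c j
      | .inr _, .inr i => b i with hM
  set q : ((Fin m ⊕ Fin n) ⊕ Unit) → ℝ :=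
    Sum.elim (Sum.elim b (fun j => -c j)) (fun _ => 0) with hq
  by_cases hsys : ∃ z : (Fin n ⊕ Fin m) → ℝ, 0 ≤ z ∧ q ≤ M *ᵥ z
  · obtain ⟨z, hz, hMz⟩ := hsys
    set xs : Fin n → ℝ := z ∘ Sum.inl with hxs
    set us : Fin m → ℝ := z ∘ Sum.inr with hus
    have hrow1 : ∀ i, (M *ᵥ z) (Sum.inl (Sum.inl i)) = (A *ᵥ xs) i := by
      intro i
      show (∑ jz, M (Sum.inl (Sum.inl i)) jz * z jz) = _
      rw [Fintype.sum_sum_type]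
      simp only [hM, mulVec, dotProduct, hxs, Function.comp_apply]
      rw [Finset.sum_congr rfl (fun j _ => mul_comm (A i j) (z (Sum.inl j)))]
      simp
    have hrow2 : ∀ j, (M *ᵥ z) (Sum.inl (Sum.inr j)) = -(us ᵥ* A) j := by
      intro j
      show (∑ jz, M (Sum.inl (Sum.inr j)) jz * z jz) = _
      rw [Fintype.sum_sum_type]
      simp only [hM, vecMul, dotProduct, hus, Function.comp_apply]
      rw [Finset.sum_congr rfl (fun i _ => show -A i j * z (Sum.inr i) = -(z (Sum.inr i) * A i j) by ring)]
      simp [Finset.sum_neg_distrib]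
    have hrow3 : (M *ᵥ z) (Sum.inr ()) = -(c ⬝ᵥ xs) + b ⬝ᵥ us := by
      show (∑ jz, M (Sum.inr ()) jz * z jz) = _
      rw [Fintype.sum_sum_type]
      simp only [hM, dotProduct, hxs, hus, Function.comp_apply]
      rw [Finset.sum_congr rfl (fun j _ => show -c j * z (Sum.inl j) = -(c j * z (Sum.inl j)) by ring),
        Finset.sum_congr rfl (fun i _ => mul_comm (b i) (z (Sum.inr i)))]
      simp [Finset.sum_neg_distrib]
    have hfeas1 : b ≤ A *ᵥ xs := fun i => by
      have := hMz (Sum.inl (Sum.inl i)); rwa [hrow1] at this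
    have hfeas2 : us ᵥ* A ≤ c := fun j => by
      have := hMz (Sum.inl (Sum.inr j))
      rw [hrow2] at this
      simp only [hq, Sum.elim_inl, Sum.elim_inr] at this
      linarith
    have hxsnn : 0 ≤ xs := fun j => hz (Sum.inl j)
    have husnn : 0 ≤ us := fun i => hz (Sum.inr i)
    have hgap : c ⬝ᵥ xs ≤ b ⬝ᵥ us := by
      have := hMz (Sum.inr ())
      rw [hrow3] at this
      simp only [hq, Sum.elim_inr] at this
      linarith
    have heq : c ⬝ᵥ xs = b ⬝ᵥ us :=
      le_antisymm hgap (weak_duality A b c hfeas1 hxsnn hfeas2 husnn)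
    refine ⟨xs, us, ⟨hfeas1, hxsnn⟩, ⟨hfeas2, husnn⟩, ?_, ?_, heq⟩
    · intro x hx1 hx2
      rw [heq]
      exact weak_duality A b c hx1 hx2 hfeas2 husnn
    · intro u hu1 hu2
      rw [← heq]
      exact weak_duality A b c hfeas1 hxsnn hu1 hu2
  · exfalso
    obtain ⟨y, hy, hyM, hqy⟩ := farkas_ineq M q hsys
    set p : Fin m → ℝ := fun i => y (Sum.inl (Sum.inl i)) with hp
    set r : Fin n → ℝ := fun j => y (Sum.inl (Sum.inr j)) with hr
    set μ : ℝ := y (Sum.inr ()) with hμ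
    have hpnn : 0 ≤ p := fun i => hy _
    have hrnn : 0 ≤ r := fun j => hy _
    have hμnn : 0 ≤ μ := hy _
    have hcol1 : ∀ j, (y ᵥ* M) (Sum.inl j) = (p ᵥ* A) j - μ * c j := by
      intro j
      show (∑ rz, y rz * M rz (Sum.inl j)) = _
      rw [Fintype.sum_sum_type, Fintype.sum_sum_type]
      simp only [hM, vecMul, dotProduct, hp, hμ]
      simp only [Finset.sum_neg_distrib, sub_eq_add_neg]
      simp
    have hcol2 : ∀ i, (y ᵥ* M) (Sum.inr i) = -(A *ᵥ r) i + μ * b i := by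
      intro i
      show (∑ rz, y rz * M rz (Sum.inr i)) = _
      rw [Fintype.sum_sum_type, Fintype.sum_sum_type]
      simp only [hM, mulVec, dotProduct, hr, hμ]
      rw [Finset.sum_congr rfl (fun jj _ =>
        show y (Sum.inl (Sum.inr jj)) * -A i jj = -(A i jj * y (Sum.inl (Sum.inr jj))) by ring)]
      simp [Finset.sum_neg_distrib]
    have hqyval : q ⬝ᵥ y = b ⬝ᵥ p - c ⬝ᵥ r := by
      show (∑ rz, q rz * y rz) = _
      rw [Fintype.sum_sum_type, Fintype.sum_sum_type]
      simp only [hq, Sum.elim_inl, Sum.elim_inr, dotProduct, hp, hr]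
      simp only [Finset.sum_neg_distrib, neg_mul, zero_mul]
      simp [sub_eq_add_neg]
    have h1 : ∀ j, (p ᵥ* A) j ≤ μ * c j := fun j => by
      have := hyM (Sum.inl j); rw [hcol1 j] at this
      simp only [Pi.zero_apply] at this; linarith
    have h2 : ∀ i, μ * b i ≤ (A *ᵥ r) i := fun i => by
      have := hyM (Sum.inr i); rw [hcol2 i] at this
      simp only [Pi.zero_apply] at this; linarith
    have h3 : c ⬝ᵥ r < b ⬝ᵥ p := by rw [hqyval] at hqy; linarith
    rcases eq_or_lt_of_le hμnn with hμ0 | hμpos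
    · -- μ = 0 : contradiction with feasibility of both programs
      have hpA : p ᵥ* A ≤ 0 := fun j => by
        have := h1 j; rw [← hμ0, zero_mul] at this; simpa using this
      have hAr : 0 ≤ A *ᵥ r := fun i => by
        have := h2 i; rw [← hμ0, zero_mul] at this; simpa using this
      have hb : b ⬝ᵥ p ≤ 0 := by
        calc b ⬝ᵥ p ≤ (A *ᵥ x0) ⬝ᵥ p := dotProduct_le_dotProduct_of_nonneg_right hx01 hpnn
          _ = (p ᵥ* A) ⬝ᵥ x0 := by rw [dotProduct_comm, dotProduct_mulVec]
          _ ≤ 0 ⬝ᵥ x0 := dotProduct_le_dotProduct_of_nonneg_right hpA hx02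
          _ = 0 := by simp
      have hc : 0 ≤ c ⬝ᵥ r := by
        calc (0:ℝ) = u0 ⬝ᵥ 0 := by simp
          _ ≤ u0 ⬝ᵥ (A *ᵥ r) := dotProduct_le_dotProduct_of_nonneg_left hAr hu02
          _ = (u0 ᵥ* A) ⬝ᵥ r := dotProduct_mulVec u0 A r
          _ ≤ c ⬝ᵥ r := dotProduct_le_dotProduct_of_nonneg_right hu01 hrnn
      linarith
    · -- μ > 0 : contradiction with weak duality
      have hfx : b ≤ A *ᵥ (μ⁻¹ • r) := fun i => by
        rw [mulVec_smul]
        have := h2 i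
        have : μ⁻¹ * (μ * b i) ≤ μ⁻¹ * (A *ᵥ r) i :=
          mul_le_mul_of_nonneg_left this (inv_nonneg.2 hμnn)
        rw [← mul_assoc, inv_mul_cancel₀ hμpos.ne', one_mul] at this
        simpa using this
      have hfu : (μ⁻¹ • p) ᵥ* A ≤ c := fun j => by
        rw [smul_vecMul]
        have := h1 j
        have h' : μ⁻¹ * (p ᵥ* A) j ≤ μ⁻¹ * (μ * c j) :=
          mul_le_mul_of_nonneg_left this (inv_nonneg.2 hμnn)
        rw [← mul_assoc, inv_mul_cancel₀ hμpos.ne', one_mul] at h'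
        simpa using h'
      have hwd := weak_duality A b c hfx (smul_nonneg (inv_nonneg.2 hμnn) hrnn)
        hfu (smul_nonneg (inv_nonneg.2 hμnn) hpnn)
      rw [dotProduct_smul, dotProduct_smul] at hwd
      have := mul_lt_mul_of_pos_left h3 (inv_pos.2 hμpos)
      simp only [smul_eq_mul] at hwd
      linarith
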